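/- Differential variant rule (dV≥): Let f be globally Lipschitz on ℝⁿ, p : ℝⁿ → ℝ a polynomial, and ε > 0 a constant. Suppose that at every state y with p(y) < 0, the Lie derivative ∇p(y)·f(y) ≥ ε. Then for every initial state x₀, the solution φ of x' = f(x) from x₀ satisfies p(φ(τ)) ≥ 0 for some τ ≥ 0. -/

import Mathlib

open MvPolynomial

/-- Differential variant rule dV≥: if `f` is globally Lipschitz and the Lie
derivative of the polynomial `p` along `f` is at least `ε > 0` wherever `p < 0`,
then along every (globally existing) solution, `p` eventually becomes `≥ 0`. -/
lemma hasDerivAt_eval_comp {n : ℕ} (p : MvPolynomial (Fin n) ℝ)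
    (φ : ℝ → (Fin n → ℝ)) (x' : Fin n → ℝ) (t : ℝ)
    (hφ : ∀ i, HasDerivAt (fun s => φ s i) (x' i) t) :
    HasDerivAt (fun s => eval (φ s) p) (∑ i, eval (φ t) (pderiv i p) * x' i) t := by
  induction p using MvPolynomial.induction_on with
  | C a => simpa using hasDerivAt_const t a
  | add p q hp hq =>
      have := hp.fun_add hq
      simpa [Finset.sum_add_distrib, add_mul] using this
  | mul_X p i hp =>
      have key := hp.fun_mul (hφ i)
      simp only [eval_mul, eval_X] at key ⊢
      refine key.congr_deriv ?_
      have hpd : ∀ j, eval (φ t) (pderiv j (p * X i)) =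
          eval (φ t) (pderiv j p) * φ t i + eval (φ t) p * (if j = i then 1 else 0) := by
        intro j
        simp [pderiv_mul, pderiv_X, Pi.single_apply, mul_comm, eq_comm]
        rcases eq_or_ne i j with h | h <;> simp [h, eq_comm, add_comm]
      simp only [hpd, add_mul, Finset.sum_add_distrib]
      congr 1
      · rw [Finset.sum_mul]
        exact Finset.sum_congr rfl (fun j _ => by ring)
      · simp [mul_ite, ite_mul]

theorem dV_ge (n : ℕ) (f : (Fin n → ℝ) → (Fin n → ℝ)) (K : NNReal)
    (hf : LipschitzWith K f) (p : MvPolynomial (Fin n) ℝ) (ε : ℝ) (hε : 0 < ε)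
    (hlie : ∀ y : Fin n → ℝ, eval y p < 0 →
      ε ≤ ∑ i : Fin n, eval y (pderiv i p) * f y i)
    (x₀ : Fin n → ℝ) (φ : ℝ → (Fin n → ℝ)) (hφ0 : φ 0 = x₀)
    (hsol : ∀ t : ℝ, 0 ≤ t → HasDerivAt φ (f (φ t)) t) :
    ∃ τ : ℝ, 0 ≤ τ ∧ 0 ≤ eval (φ τ) p := by
  by_contra hc
  push_neg at hc
  set g : ℝ → ℝ := fun t => eval (φ t) p with hg
  have hneg : ∀ t, 0 ≤ t → g t < 0 := hc
  have hcoord : ∀ t, 0 ≤ t → ∀ i, HasDerivAt (fun s => φ s i) (f (φ t) i) t := by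
    intro t ht i
    exact ((ContinuousLinearMap.proj i : (Fin n → ℝ) →L[ℝ] ℝ).hasFDerivAt.comp_hasDerivAt
      t (hsol t ht))
  have hgderiv : ∀ t, 0 ≤ t →
      HasDerivAt g (∑ i, eval (φ t) (pderiv i p) * f (φ t) i) t := by
    intro t ht
    exact hasDerivAt_eval_comp p φ (f (φ t)) t (hcoord t ht)
  -- F t = g t - ε t is monotone on [0, T]
  set T : ℝ := -g 0 / ε with hT
  have hg0 : g 0 < 0 := hneg 0 le_rfl
  have hTpos : 0 < T := div_pos (by linarith) hε
  set F : ℝ → ℝ := fun t => g t - ε * t with hF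
  have hFmono : MonotoneOn F (Set.Icc 0 T) := by
    apply monotoneOn_of_hasDerivWithinAt_nonneg (convex_Icc 0 T)
      (f' := fun t => (∑ i, eval (φ t) (pderiv i p) * f (φ t) i) - ε)
    · intro t ht
      exact ((hgderiv t ht.1).sub ((hasDerivAt_id t).const_mul ε)).continuousAt.continuousWithinAt
    · intro t ht
      rw [interior_Icc] at ht
      simpa [F] using (((hgderiv t ht.1.le).fun_sub ((hasDerivAt_id t).const_mul ε)).hasDerivWithinAt)
    · intro t ht
      rw [interior_Icc] at ht
      have := hlie (φ t) (hneg t ht.1.le)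
      linarith
  have h1 : F 0 ≤ F T := hFmono (Set.left_mem_Icc.2 hTpos.le)
    (Set.right_mem_Icc.2 hTpos.le) hTpos.le
  have hεT : ε * T = -g 0 := by rw [hT]; field_simp
  have := hneg T hTpos.le
  have h2 : g 0 - ε * 0 ≤ g T - ε * T := h1
  rw [hεT] at h2
  linarith
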